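/- Let α, τ, ξ be real numbers with 0 < α < 1/2 and 0 < ξ < 1/4, and suppose either α ≤ τ < 1 or 1+α ≤ τ < 2. Then arg T_B > −4αξ and −4αξ > arg T_s, where arg denotes the principal argument with values in (−π, π]. -/

import Mathlib

open Real Complex Filter Finset Topology

section AuxLemmas

-- arg lemmas
lemma im_mul_exp (z : ℂ) (θ : ℝ) :
    (z * Complex.exp (θ * Complex.I)).im = ‖z‖ * Real.sin (z.arg + θ) := by
  conv_lhs => rw [← Complex.norm_mul_exp_arg_mul_I z]
  rw [mul_assoc, ← Complex.exp_add, ← add_mul]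
  have : (z.arg : ℂ) + (θ : ℂ) = ((z.arg + θ : ℝ) : ℂ) := by push_cast; ring
  simp only [this, Complex.mul_im, Complex.ofReal_re, Complex.ofReal_im,
    Complex.exp_ofReal_mul_I_im, Complex.exp_ofReal_mul_I_re]
  ring

lemma argLemmaA {z : ℂ} {θ : ℝ} (h0 : 0 < θ) (hπ : θ < Real.pi)
    (h : 0 < (z * Complex.exp (θ * Complex.I)).im) : -θ < z.arg := by
  rw [im_mul_exp] at h
  by_contra hc
  push_neg at hc
  have h1 : z.arg + θ ≤ 0 := by linarith
  have h2 : -Real.pi ≤ z.arg + θ := by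
    have := Complex.neg_pi_lt_arg z; linarith
  have := Real.sin_nonpos_of_nonpos_of_neg_pi_le h1 h2
  nlinarith [norm_nonneg z]

lemma argLemmaB {z : ℂ} {θ : ℝ} (h0 : 0 < θ) (hπ : θ < Real.pi) (hz : z.im < 0)
    (h : (z * Complex.exp (θ * Complex.I)).im < 0) : z.arg < -θ := by
  rw [im_mul_exp] at h
  have ha : z.arg < 0 := Complex.arg_neg_iff.mpr hz
  by_contra hc
  push_neg at hc
  have h1 : 0 ≤ z.arg + θ := by linarith
  have h2 : z.arg + θ ≤ Real.pi := by linarith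
  have := Real.sin_nonneg_of_nonneg_of_le_pi h1 h2
  nlinarith [norm_nonneg z]


lemma arctan_sub_le {u v : ℝ} (hvu : v ≤ u) : Real.arctan u - Real.arctan v ≤ u - v := by
  have hd : ∀ x : ℝ, HasDerivAt (fun y => y - Real.arctan y) (1 - 1 / (1 + x ^ 2)) x :=
    fun x => (hasDerivAt_id x).sub (Real.hasDerivAt_arctan x)
  have mono : Monotone (fun y => y - Real.arctan y) := by
    apply monotone_of_deriv_nonneg
    · exact fun x => ((hd x).differentiableAt)
    · intro x
      rw [(hd x).deriv]
      have h1 : 1 / (1 + x ^ 2) ≤ 1 := by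
        rw [div_le_one (by positivity)]; nlinarith
      linarith
  have := mono hvu
  simp only at this
  linarith

lemma arg_re_pos_eq_arctan {z : ℂ} (hz : 0 < z.re) : z.arg = Real.arctan (z.im / z.re) := by
  have h1 : -(Real.pi/2) < z.arg := Complex.neg_pi_div_two_lt_arg_iff.mpr (Or.inl hz)
  have h2 : z.arg < Real.pi/2 := Complex.arg_lt_pi_div_two_iff.mpr (Or.inl hz)
  rw [← Complex.tan_arg, Real.arctan_tan h1 h2]

lemma exp_lt_inv_one_sub {x : ℝ} (hx : 0 < x) (hx1 : x < 1) : Real.exp x < (1 - x)⁻¹ := by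
  have h := Real.add_one_lt_exp (x := -x) (by linarith : (-x : ℝ) ≠ 0)
  rw [Real.exp_neg] at h
  have hex : 0 < Real.exp x := Real.exp_pos x
  have h1x : (0:ℝ) < 1 - x := by linarith
  have hAB : Real.exp x * (1 - x) < 1 := by
    have := mul_lt_mul_of_pos_left h hex
    rw [mul_inv_cancel₀ (ne_of_gt hex)] at this
    nlinarith
  rw [← one_div, lt_div_iff₀ h1x]
  linarith

lemma cosh_pi_div_four_lt : Real.cosh (Real.pi / 4) < 1.34 := by
  have hπu : Real.pi < 3.1416 := by linarith [Real.pi_lt_d6]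
  have hπl : 3.1415 < Real.pi := by linarith [Real.pi_gt_d6]
  have h32 : (Real.pi / 4) = (32:ℕ) * (Real.pi / 128) := by push_cast; ring
  have hd : (0:ℝ) < Real.pi / 128 := by linarith
  have e1 : Real.exp (Real.pi/4) = Real.exp (Real.pi/128) ^ 32 := by
    rw [h32, Real.exp_nat_mul]
  have b1 : Real.exp (Real.pi/128) < ((1 - 3.1416/128 : ℝ))⁻¹ := by
    refine lt_of_lt_of_le (exp_lt_inv_one_sub hd (by linarith)) ?_
    apply inv_anti₀ (by norm_num)
    linarith
  have p1 : Real.exp (Real.pi/4) < ((1 - 3.1416/128:ℝ)⁻¹) ^ 32 := by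
    rw [e1]
    exact pow_lt_pow_left₀ b1 (Real.exp_pos _).le (by norm_num)
  have e2 : Real.exp (-(Real.pi/4)) = Real.exp (-(Real.pi/128)) ^ 32 := by
    have : (-(Real.pi / 4)) = (32:ℕ) * (-(Real.pi / 128)) := by push_cast; ring
    rw [this, Real.exp_nat_mul]
  have b2 : Real.exp (-(Real.pi/128)) < ((1 + 3.1415/128 : ℝ))⁻¹ := by
    rw [Real.exp_neg]
    have hlow : (1 + 3.1415/128 : ℝ) < Real.exp (Real.pi/128) := by
      have := Real.add_one_lt_exp (x := Real.pi/128) (ne_of_gt hd)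
      linarith
    exact inv_strictAnti₀ (by norm_num) hlow
  have p2 : Real.exp (-(Real.pi/4)) < ((1 + 3.1415/128:ℝ)⁻¹) ^ 32 := by
    rw [e2]
    exact pow_lt_pow_left₀ b2 (Real.exp_pos _).le (by norm_num)
  have n1 : ((1 - 3.1416/128:ℝ)⁻¹) ^ 32 < 2.2149 := by norm_num
  have n2 : ((1 + 3.1415/128:ℝ)⁻¹) ^ 32 < 0.4603 := by norm_num
  rw [Real.cosh_eq]
  norm_num at *
  linarith

lemma core_s {α ξ : ℝ} (hα : 0 < α) (hα' : α < 1/2) (hξ : 0 < ξ) (hξ' : ξ < 1/4) :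
    Real.cosh (π*ξ) * Real.sin (4*α*ξ) < Real.sinh (π*ξ) * (Real.cos (4*α*ξ) * Real.sin (π*α)) := by
  have hπu : Real.pi < 3.1416 := by linarith [Real.pi_lt_d6]
  have hπl : 3.1415 < Real.pi := by linarith [Real.pi_gt_d6]
  have h1 : Real.sin (4*α*ξ) ≤ 4*α*ξ := Real.sin_le (by positivity)
  have h2 : 2*α ≤ Real.sin (π*α) := by
    have h := Real.mul_le_sin (x := π*α) (by positivity) (by nlinarith)
    have : 2/π*(π*α) = 2*α := by
      field_simp
    linarith
  have h3 : 1 - 8*α^2*ξ^2 ≤ Real.cos (4*α*ξ) := by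
    have h := Real.one_sub_sq_div_two_le_cos (x := 4*α*ξ)
    have : (4*α*ξ)^2/2 = 8*α^2*ξ^2 := by ring
    linarith
  have h4 : π*ξ < Real.sinh (π*ξ) := Real.self_lt_sinh_iff.mpr (by positivity)
  have h5 : Real.cosh (π*ξ) ≤ Real.cosh (π/4) := by
    rw [Real.cosh_le_cosh, abs_of_pos (by positivity), abs_of_pos (by positivity)]
    nlinarith
  have h6 := cosh_pi_div_four_lt
  have hc : (0:ℝ) < Real.cosh (π*ξ) := Real.cosh_pos _
  have hsin_nonneg : 0 ≤ Real.sin (4*α*ξ) := by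
    apply Real.sin_nonneg_of_nonneg_of_le_pi (by positivity); nlinarith
  have h8 : α*ξ < 1/8 := by nlinarith
  have hsq : α^2*ξ^2 < 1/64 := by nlinarith [mul_pos hα hξ]
  have step1 : Real.cosh (π*ξ) * Real.sin (4*α*ξ) ≤ 1.34 * (4*α*ξ) := by
    nlinarith
  have hcospos : (0:ℝ) < 1 - 8*α^2*ξ^2 := by nlinarith
  have key : (2.68:ℝ) < π*(1-8*α^2*ξ^2) := by nlinarith
  have step2 : (1.34:ℝ) * (4*α*ξ) < (π*ξ) * ((1 - 8*α^2*ξ^2) * (2*α)) := by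
    have hm := mul_lt_mul_of_pos_left key (show (0:ℝ) < 2*(α*ξ) by positivity)
    nlinarith [hm]
  have step3 : (π*ξ) * ((1 - 8*α^2*ξ^2) * (2*α)) ≤ Real.sinh (π*ξ) * (Real.cos (4*α*ξ) * Real.sin (π*α)) := by
    have hπξ : (0:ℝ) < π*ξ := by positivity
    have hfac : (1 - 8*α^2*ξ^2) * (2*α) ≤ Real.cos (4*α*ξ) * Real.sin (π*α) := by
      exact mul_le_mul h3 h2 (by positivity) (le_trans hcospos.le h3)
    have hfacpos : (0:ℝ) < (1 - 8*α^2*ξ^2) * (2*α) := by positivity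
    exact mul_le_mul h4.le hfac hfacpos.le (by linarith)
  linarith


end AuxLemmas

/-- The term `T_s` of the generalised Fredholm symbol on the segment `Γ₁`. -/
noncomputable def Ts (α τ ξ : ℝ) : ℂ :=
  Complex.sin ((Real.pi : ℂ) * (1 - (τ : ℂ) + (α : ℂ) - Complex.I * (ξ : ℂ))) /
    Complex.sin ((Real.pi : ℂ) * (1 - (τ : ℂ) + 2 * (α : ℂ) - Complex.I * (ξ : ℂ)))

/-- The term `T_B` of the generalised Fredholm symbol on the segment `Γ₁`. -/
noncomputable def TB (α τ ξ : ℝ) : ℂ :=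
  Complex.sin ((Real.pi : ℂ) * (α : ℂ)) / (Real.pi : ℂ) *
      Complex.Gamma ((τ : ℂ) - 2 * (α : ℂ) + 1 + Complex.I * (ξ : ℂ)) *
      Complex.Gamma (2 * (α : ℂ)) /
    Complex.Gamma ((τ : ℂ) + 1 + Complex.I * (ξ : ℂ))

section MainParts

lemma sin_pi_mul (x y : ℝ) : Complex.sin ((π:ℂ) * ((x:ℂ) - Complex.I*(y:ℂ))) =
    ((Real.sin (π*x) * Real.cosh (π*y) : ℝ) : ℂ)
      - ((Real.cos (π*x) * Real.sinh (π*y) : ℝ) : ℂ) * Complex.I := by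
  have h : (π:ℂ)*((x:ℂ) - Complex.I*(y:ℂ)) = ((π*x : ℝ) : ℂ) + ((-(π*y) : ℝ) : ℂ) * Complex.I := by
    push_cast; ring
  rw [h, Complex.sin_add_mul_I, ← Complex.ofReal_sin, ← Complex.ofReal_cos,
    ← Complex.ofReal_cosh, ← Complex.ofReal_sinh]
  push_cast [Real.cosh_neg, Real.sinh_neg]
  ring

set_option maxHeartbeats 1000000 in
lemma Ts_arg_lt (α τ ξ : ℝ) (hα : 0 < α) (hα' : α < 1 / 2) (hξ : 0 < ξ) (hξ' : ξ < 1 / 4) :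
    Complex.arg (Ts α τ ξ) < -4 * α * ξ := by
  have hre : ∀ x y : ℝ, ((x:ℂ) - (y:ℂ)*Complex.I).re = x := by intros; simp
  have him : ∀ x y : ℝ, ((x:ℂ) - (y:ℂ)*Complex.I).im = -y := by intros; simp
  set θ : ℝ := 4*α*ξ with hθdef
  have hθpos : 0 < θ := by positivity
  have hθsmall : θ < 1/2 := by nlinarith
  have hθπ : θ < π := by nlinarith [Real.pi_gt_three]
  set sβ := Real.sin (π*(1-τ+α)) with hsβ
  set cβ := Real.cos (π*(1-τ+α)) with hcβ
  set sγ := Real.sin (π*(1-τ+2*α)) with hsγ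
  set cγ := Real.cos (π*(1-τ+2*α)) with hcγ
  set sα := Real.sin (π*α) with hsα
  set cα := Real.cos (π*α) with hcα
  set u := Real.cosh (π*ξ) with hu
  set v := Real.sinh (π*ξ) with hv
  set sθ := Real.sin θ with hsθ
  set cθ := Real.cos θ with hcθ
  have hP1 : sβ^2 + cβ^2 = 1 := Real.sin_sq_add_cos_sq _
  have hP2 : sγ^2 + cγ^2 = 1 := Real.sin_sq_add_cos_sq _
  have hu2 : u^2 = v^2 + 1 := Real.cosh_sq _
  have hvpos : 0 < v := Real.sinh_pos_iff.mpr (by positivity)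
  have hu1 : 1 ≤ u := Real.one_le_cosh _
  have hsαpos : 0 < sα := Real.sin_pos_of_pos_of_lt_pi (by positivity) (by nlinarith)
  have hsθnn : 0 ≤ sθ := Real.sin_nonneg_of_nonneg_of_le_pi hθpos.le (by nlinarith [Real.pi_gt_three])
  have hcθpos : 0 < cθ := Real.cos_pos_of_mem_Ioo ⟨by nlinarith [Real.pi_gt_three], by nlinarith [Real.pi_gt_three]⟩
  have hcross : sβ*cγ - cβ*sγ = -sα := by
    have h1 : π*(1-τ+2*α) = π*(1-τ+α) + π*α := by ring
    rw [hsγ, hcγ, h1, Real.sin_add, Real.cos_add, ← hsβ, ← hcβ, ← hsα, ← hcα]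
    linear_combination (-sα) * hP1
  have hsum : sβ*sγ + cβ*cγ ≤ 1 := by nlinarith [sq_nonneg (sβ-sγ), sq_nonneg (cβ-cγ)]
  have hss : sβ*sγ ≤ 1 := by nlinarith [sq_nonneg (sβ-sγ)]
  have hE : sβ*sγ*u^2 + cβ*cγ*v^2 ≤ u^2 := by nlinarith [sq_nonneg v]
  -- rewrite Ts
  have hw1 : Complex.sin ((π:ℂ) * (1 - (τ:ℂ) + (α:ℂ) - Complex.I*(ξ:ℂ))) =
      ((sβ*u : ℝ) : ℂ) - ((cβ*v : ℝ) : ℂ) * Complex.I := by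
    have h : (π:ℂ) * (1 - (τ:ℂ) + (α:ℂ) - Complex.I*(ξ:ℂ))
        = (π:ℂ) * (((1-τ+α : ℝ):ℂ) - Complex.I*(ξ:ℂ)) := by push_cast; ring
    rw [h, sin_pi_mul]
  have hw2 : Complex.sin ((π:ℂ) * (1 - (τ:ℂ) + 2*(α:ℂ) - Complex.I*(ξ:ℂ))) =
      ((sγ*u : ℝ) : ℂ) - ((cγ*v : ℝ) : ℂ) * Complex.I := by
    have h : (π:ℂ) * (1 - (τ:ℂ) + 2*(α:ℂ) - Complex.I*(ξ:ℂ))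
        = (π:ℂ) * (((1-τ+2*α : ℝ):ℂ) - Complex.I*(ξ:ℂ)) := by push_cast; ring
    rw [h, sin_pi_mul]
  have hTs : Ts α τ ξ = (((sβ*u : ℝ) : ℂ) - ((cβ*v : ℝ) : ℂ) * Complex.I) /
      (((sγ*u : ℝ) : ℂ) - ((cγ*v : ℝ) : ℂ) * Complex.I) := by
    rw [Ts, hw1, hw2]
  have hKpos : 0 < Complex.normSq (((sγ*u : ℝ) : ℂ) - ((cγ*v : ℝ) : ℂ) * Complex.I) := by
    have : Complex.normSq (((sγ*u : ℝ) : ℂ) - ((cγ*v : ℝ) : ℂ) * Complex.I)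
        = (sγ*u)^2 + (cγ*v)^2 := by
      rw [Complex.normSq_apply, hre, him]; ring
    rw [this]
    nlinarith [sq_nonneg (sγ*u), sq_nonneg (cγ*v), sq_nonneg sγ, sq_nonneg cγ]
  -- Im Ts < 0
  have hIm : (Ts α τ ξ).im < 0 := by
    rw [hTs, Complex.div_im, hre, hre, him, him]
    have hnum : -(cβ*v) * (sγ*u) - (sβ*u) * -(cγ*v) = -(u*v*sα) := by
      linear_combination (u*v) * hcross
    rw [div_sub_div_same, hnum]
    apply div_neg_of_neg_of_pos _ hKpos
    have hupos : (0:ℝ) < u := lt_of_lt_of_le one_pos hu1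
    nlinarith [mul_pos (mul_pos hupos hvpos) hsαpos]
  -- Im (Ts e^{iθ}) < 0
  have hexp : Complex.exp ((θ:ℂ) * Complex.I) = ((cθ : ℝ):ℂ) + ((sθ : ℝ):ℂ)*Complex.I := by
    rw [Complex.exp_mul_I, ← Complex.ofReal_cos, ← Complex.ofReal_sin]
  have hIm2 : (Ts α τ ξ * Complex.exp ((θ:ℝ) * Complex.I)).im < 0 := by
    rw [hTs, div_mul_eq_mul_div]
    have hnum2 : ((((sβ*u : ℝ) : ℂ) - ((cβ*v : ℝ) : ℂ) * Complex.I) * Complex.exp ((θ:ℂ) * Complex.I))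
        = (((sβ*u*cθ + cβ*v*sθ : ℝ)) : ℂ) - (((cβ*v*cθ - sβ*u*sθ : ℝ)) : ℂ) * Complex.I := by
      rw [hexp]; push_cast
      linear_combination (-(cβ:ℂ) * (v:ℂ) * (sθ:ℂ)) * Complex.I_sq
    rw [hnum2, Complex.div_im, hre, hre, him, him, div_sub_div_same]
    apply div_neg_of_neg_of_pos _ hKpos
    have hexpand : -(cβ*v*cθ - sβ*u*sθ) * (sγ*u) - (sβ*u*cθ + cβ*v*sθ) * -(cγ*v)
        = sθ*(sβ*sγ*u^2 + cβ*cγ*v^2) + cθ*(u*v)*(sβ*cγ - cβ*sγ) := by ring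
    rw [hexpand, hcross]
    have h1 : sθ*(sβ*sγ*u^2 + cβ*cγ*v^2) ≤ sθ*u^2 := by
      exact mul_le_mul_of_nonneg_left hE hsθnn
    have hcore := core_s hα hα' hξ hξ'
    -- u*sθ < v*(cθ*sα)
    have h2 : u*(u*sθ) < u*(v*(cθ*sα)) := by
      apply mul_lt_mul_of_pos_left _ (by linarith : (0:ℝ) < u)
      calc u*sθ = Real.cosh (π*ξ) * Real.sin (4*α*ξ) := by rw [hu, hsθ, hθdef]
        _ < Real.sinh (π*ξ) * (Real.cos (4*α*ξ) * Real.sin (π*α)) := hcore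
        _ = v*(cθ*sα) := by rw [hv, hcθ, hsα, hθdef]
    nlinarith
  have := argLemmaB hθpos hθπ hIm hIm2
  linarith

lemma im_ofReal_mul_exp (r x : ℝ) :
    ((r:ℂ) * Complex.exp ((x:ℂ) * Complex.I)).im = r * Real.sin x := by
  simp only [Complex.mul_im, Complex.ofReal_re, Complex.ofReal_im,
    Complex.exp_ofReal_mul_I_im, Complex.exp_ofReal_mul_I_re]
  ring

lemma div_polar (z w : ℂ) (hw : w ≠ 0) :
    z / w = ((‖z‖ / ‖w‖ : ℝ) : ℂ) *
      Complex.exp (((z.arg - w.arg : ℝ) : ℂ) * Complex.I) := by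
  conv_lhs => rw [← Complex.norm_mul_exp_arg_mul_I z, ← Complex.norm_mul_exp_arg_mul_I w]
  rw [mul_div_mul_comm, ← Complex.exp_sub, ← Complex.ofReal_div]
  congr 1
  push_cast
  ring

lemma prod_ofReal_mul_exp (s : Finset ℕ) (c ψ : ℕ → ℝ) :
    (∏ j ∈ s, ((c j : ℂ) * Complex.exp ((ψ j : ℂ) * Complex.I))) =
      ((∏ j ∈ s, c j : ℝ) : ℂ) * Complex.exp (((∑ j ∈ s, ψ j : ℝ) : ℂ) * Complex.I) := by
  induction s using Finset.cons_induction with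
  | empty => simp
  | cons a s ha ih =>
    rw [Finset.prod_cons, ih, Finset.prod_cons, Finset.sum_cons]
    push_cast
    rw [add_mul, Complex.exp_add]
    ring

set_option maxHeartbeats 1000000 in
lemma TB_arg_gt (α τ ξ : ℝ) (hα : 0 < α) (hα' : α < 1 / 2) (hξ : 0 < ξ) (hξ' : ξ < 1 / 4)
    (hτ : (α ≤ τ ∧ τ < 1) ∨ (1 + α ≤ τ ∧ τ < 2)) :
    -4 * α * ξ < Complex.arg (TB α τ ξ) := by
  have hτα : α ≤ τ := by rcases hτ with ⟨h, _⟩ | ⟨h, _⟩ <;> linarith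
  set a : ℝ := τ - 2*α + 1 with hadef
  set b : ℝ := τ + 1 with hbdef
  have hba : b = a + 2*α := by rw [hadef, hbdef]; ring
  have ha1 : 1 - α ≤ a := by rw [hadef]; linarith
  have hb1 : 1 + α ≤ b := by rw [hbdef]; linarith
  have hapos : 0 < a := by linarith
  have hbpos : 0 < b := by linarith
  set za : ℂ := (τ : ℂ) - 2 * (α : ℂ) + 1 + Complex.I * (ξ : ℂ) with hzadef
  set zb : ℂ := (τ : ℂ) + 1 + Complex.I * (ξ : ℂ) with hzbdef
  have hre_za : ∀ j : ℕ, (za + (j:ℂ)).re = a + j := by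
    intro j; rw [hzadef, hadef]; simp
  have him_za : ∀ j : ℕ, (za + (j:ℂ)).im = ξ := by
    intro j; rw [hzadef]; simp
  have hre_zb : ∀ j : ℕ, (zb + (j:ℂ)).re = b + j := by
    intro j; rw [hzbdef, hbdef]; simp
  have him_zb : ∀ j : ℕ, (zb + (j:ℂ)).im = ξ := by
    intro j; rw [hzbdef]; simp
  have hza_ne : ∀ j : ℕ, za + (j:ℂ) ≠ 0 := by
    intro j h
    have h2 := him_za j
    rw [h] at h2; simp at h2; linarith
  have hzb_ne : ∀ j : ℕ, zb + (j:ℂ) ≠ 0 := by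
    intro j h
    have h2 := him_zb j
    rw [h] at h2; simp at h2; linarith
  have harg_za : ∀ j : ℕ, (za + (j:ℂ)).arg = Real.arctan (ξ / (a + j)) := by
    intro j
    rw [arg_re_pos_eq_arctan (by rw [hre_za j]; positivity), hre_za j, him_za j]
  have harg_zb : ∀ j : ℕ, (zb + (j:ℂ)).arg = Real.arctan (ξ / (b + j)) := by
    intro j
    rw [arg_re_pos_eq_arctan (by rw [hre_zb j]; positivity), hre_zb j, him_zb j]
  set φ : ℕ → ℝ := fun n => ∑ j ∈ Finset.range (n+1),
      ((za + (j:ℂ)).arg - (zb + (j:ℂ)).arg) with hφdef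
  set Sstar : ℝ := 2*α*ξ/((1-α)*(1+α)) + 4/3*α*ξ with hSdef
  set θ : ℝ := 4*α*ξ with hθdef
  set δ : ℝ := θ - Sstar with hδdef
  have hθpos : 0 < θ := by rw [hθdef]; positivity
  have hθsmall : θ < 1/2 := by rw [hθdef]; nlinarith
  have hθπ : θ < π := by nlinarith [Real.pi_gt_three]
  have hden1 : (0:ℝ) < (1-α)*(1+α) := by nlinarith
  have hδpos : 0 < δ := by
    rw [hδdef, hθdef, hSdef]
    have h2 : 2*α*ξ/((1-α)*(1+α)) < 8/3*α*ξ := by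
      rw [div_lt_iff₀ hden1]
      nlinarith [mul_pos (mul_pos hα hξ) (show (0:ℝ) < 1/4 - α^2 by nlinarith)]
    linarith
  have hS0 : 0 ≤ Sstar := by
    rw [hSdef]
    have : 0 ≤ 2*α*ξ/((1-α)*(1+α)) := by positivity
    nlinarith
  have hδθ : δ ≤ θ := by rw [hδdef]; linarith
  -- per-term bounds
  have hterm_nonneg : ∀ j : ℕ, 0 ≤ (za + (j:ℂ)).arg - (zb + (j:ℂ)).arg := by
    intro j
    rw [harg_za, harg_zb, sub_nonneg]
    apply Real.arctan_strictMono.monotone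
    have hj : (0:ℝ) ≤ (j:ℝ) := Nat.cast_nonneg j
    exact div_le_div_of_nonneg_left hξ.le (by linarith) (by linarith)
  have hterm_le : ∀ j : ℕ,
      (za + (j:ℂ)).arg - (zb + (j:ℂ)).arg ≤ 2*α*ξ/((a+j)*(b+j)) := by
    intro j
    rw [harg_za, harg_zb]
    have hj : (0:ℝ) ≤ (j:ℝ) := Nat.cast_nonneg j
    have hle : ξ/(b+j) ≤ ξ/(a+j) := div_le_div_of_nonneg_left hξ.le (by linarith) (by linarith)
    refine le_trans (arctan_sub_le hle) ?_
    have heq : ξ/(a+j) - ξ/(b+j) = 2*α*ξ/((a+j)*(b+j)) := by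
      rw [hba]
      field_simp
      ring
    rw [heq]
  have hφ_nonneg : ∀ n, 0 ≤ φ n := by
    intro n
    rw [hφdef]
    exact Finset.sum_nonneg (fun j _ => hterm_nonneg j)
  have hφ_le : ∀ n : ℕ, φ n ≤ Sstar := by
    intro n
    rw [hφdef]
    simp only []
    rw [Finset.sum_range_succ']
    set g : ℕ → ℝ := fun j => 2*α*ξ/((j:ℝ)+3/2) with hgdef
    have h0 : (za + ((0:ℕ):ℂ)).arg - (zb + ((0:ℕ):ℂ)).arg ≤ 2*α*ξ/((1-α)*(1+α)) := by
      refine le_trans (hterm_le 0) ?_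
      have hc0 : ((0:ℕ):ℝ) = 0 := by norm_num
      rw [hc0]
      apply div_le_div_of_nonneg_left (by positivity) hden1
      nlinarith
    have h1 : ∑ j ∈ Finset.range n, ((za + ((j+1:ℕ):ℂ)).arg - (zb + ((j+1:ℕ):ℂ)).arg)
        ≤ ∑ j ∈ Finset.range n, (g j - g (j+1)) := by
      apply Finset.sum_le_sum
      intro j _
      refine le_trans (hterm_le (j+1)) ?_
      have hj : (0:ℝ) ≤ (j:ℝ) := Nat.cast_nonneg j
      have hcast : ((j+1:ℕ):ℝ) = (j:ℝ) + 1 := by push_cast; ring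
      have hgeq : g j - g (j+1) = 2*α*ξ/(((j:ℝ)+3/2)*((j:ℝ)+5/2)) := by
        rw [hgdef]
        simp only []
        push_cast
        rw [div_sub_div _ _ (by positivity) (by positivity)]
        rw [show ((j:ℝ)+1+3/2) = (j:ℝ)+5/2 by ring]
        congr 1
        ring
      rw [hgeq, hcast]
      have hx : (j:ℝ)+2-α ≤ a+((j:ℝ)+1) := by linarith
      have hy : (j:ℝ)+2+α ≤ b+((j:ℝ)+1) := by linarith
      have hq : α^2 < 1/4 := by nlinarith
      apply div_le_div_of_nonneg_left (by positivity) (by positivity)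
      nlinarith [mul_le_mul hx hy (by linarith : (0:ℝ) ≤ (j:ℝ)+2+α) (by linarith : (0:ℝ) ≤ a+((j:ℝ)+1))]
    have h2 : ∑ j ∈ Finset.range n, (g j - g (j+1)) = g 0 - g n :=
      Finset.sum_range_sub' g n
    have hg0 : g 0 = 4/3*α*ξ := by rw [hgdef]; norm_num; ring
    have hgn : 0 ≤ g n := by rw [hgdef]; positivity
    rw [hSdef]
    linarith
  -- structural representation of the GammaSeq ratio
  have hρrep : ∀ n : ℕ, 1 ≤ n → ∃ ρ : ℝ, 0 ≤ ρ ∧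
      ρ = ‖Complex.GammaSeq za n / Complex.GammaSeq zb n‖ ∧
      Complex.GammaSeq za n / Complex.GammaSeq zb n
        = ((ρ:ℝ):ℂ) * Complex.exp (((-φ n : ℝ):ℂ) * Complex.I) := by
    intro n hn
    have hnne : (n:ℂ) ≠ 0 := Nat.cast_ne_zero.mpr (by omega)
    have hPa : (∏ j ∈ Finset.range (n+1), (za + (j:ℂ))) ≠ 0 :=
      Finset.prod_ne_zero_iff.mpr (fun j _ => hza_ne j)
    have hPb : (∏ j ∈ Finset.range (n+1), (zb + (j:ℂ))) ≠ 0 :=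
      Finset.prod_ne_zero_iff.mpr (fun j _ => hzb_ne j)
    have hfact : ((n.factorial : ℕ):ℂ) ≠ 0 := Nat.cast_ne_zero.mpr (Nat.factorial_ne_zero n)
    have hcpa : (n:ℂ)^za ≠ 0 := by
      rw [Ne, Complex.cpow_eq_zero_iff]
      tauto
    have hcpb : (n:ℂ)^zb ≠ 0 := by
      rw [Ne, Complex.cpow_eq_zero_iff]
      tauto
    have E1 : Complex.GammaSeq za n / Complex.GammaSeq zb n
        = ((n:ℂ)^za / (n:ℂ)^zb) * ∏ j ∈ Finset.range (n+1), ((zb+(j:ℂ))/(za+(j:ℂ))) := by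
      rw [Complex.GammaSeq, Complex.GammaSeq, Finset.prod_div_distrib]
      field_simp
    have E2 : (n:ℂ)^za / (n:ℂ)^zb = (((n:ℝ)^(-(2*α)) : ℝ) : ℂ) := by
      have h1 : za - zb = ((-(2*α) : ℝ) : ℂ) := by rw [hzadef, hzbdef]; push_cast; ring
      rw [← Complex.cpow_sub _ _ hnne, h1,
        show ((n:ℂ)) = (((n:ℝ):ℂ)) from by norm_num,
        ← Complex.ofReal_cpow (Nat.cast_nonneg n)]
    have E3 : (∏ j ∈ Finset.range (n+1), ((zb+(j:ℂ))/(za+(j:ℂ))))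
        = ((∏ j ∈ Finset.range (n+1), (‖zb+(j:ℂ)‖ / ‖za+(j:ℂ)‖) : ℝ) : ℂ)
          * Complex.exp (((∑ j ∈ Finset.range (n+1),
              ((zb+(j:ℂ)).arg - (za+(j:ℂ)).arg) : ℝ) : ℂ) * Complex.I) := by
      rw [← prod_ofReal_mul_exp]
      exact Finset.prod_congr rfl (fun j _ => div_polar _ _ (hza_ne j))
    have hsumneg : (∑ j ∈ Finset.range (n+1), ((zb+(j:ℂ)).arg - (za+(j:ℂ)).arg)) = -φ n := by
      rw [hφdef]
      simp only []
      rw [← Finset.sum_neg_distrib]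
      exact Finset.sum_congr rfl (fun j _ => by ring)
    set ρ : ℝ := (n:ℝ)^(-(2*α)) * ∏ j ∈ Finset.range (n+1),
        (‖zb+(j:ℂ)‖ / ‖za+(j:ℂ)‖) with hρdef
    have hρ0 : 0 ≤ ρ := by
      rw [hρdef]
      apply mul_nonneg (Real.rpow_nonneg (Nat.cast_nonneg n) _)
      exact Finset.prod_nonneg (fun j _ => div_nonneg (norm_nonneg _) (norm_nonneg _))
    have hEq : Complex.GammaSeq za n / Complex.GammaSeq zb n
        = ((ρ:ℝ):ℂ) * Complex.exp (((-φ n : ℝ):ℂ) * Complex.I) := by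
      rw [E1, E2, E3, hsumneg, hρdef]
      push_cast
      ring
    refine ⟨ρ, hρ0, ?_, hEq⟩
    rw [hEq, norm_mul, Complex.norm_real, Complex.norm_exp_ofReal_mul_I, mul_one,
      Real.norm_of_nonneg hρ0]
  -- limits
  have hΓa : Complex.Gamma za ≠ 0 := by
    apply Complex.Gamma_ne_zero
    intro m h
    have h2 : za.im = ξ := by rw [hzadef]; simp
    rw [h] at h2; simp at h2; linarith
  have hΓb : Complex.Gamma zb ≠ 0 := by
    apply Complex.Gamma_ne_zero
    intro m h
    have h2 : zb.im = ξ := by rw [hzbdef]; simp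
    rw [h] at h2; simp at h2; linarith
  set R : ℂ := Complex.Gamma za / Complex.Gamma zb with hRdef
  have hRne : R ≠ 0 := div_ne_zero hΓa hΓb
  have htendR : Tendsto (fun n => Complex.GammaSeq za n / Complex.GammaSeq zb n) atTop (𝓝 R) :=
    (Complex.GammaSeq_tendsto_Gamma za).div (Complex.GammaSeq_tendsto_Gamma zb) hΓb
  have htendIm : Tendsto
      (fun n => ((Complex.GammaSeq za n / Complex.GammaSeq zb n) * Complex.exp ((θ:ℂ) * Complex.I)).im)
      atTop (𝓝 ((R * Complex.exp ((θ:ℂ) * Complex.I)).im)) :=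
    (Complex.continuous_im.tendsto _).comp (htendR.mul_const _)
  have htendAbs : Tendsto
      (fun n => Real.sin δ * ‖Complex.GammaSeq za n / Complex.GammaSeq zb n‖)
      atTop (𝓝 (Real.sin δ * ‖R‖)) :=
    ((continuous_norm.tendsto _).comp htendR).const_mul _
  have hev : ∀ᶠ n in atTop,
      Real.sin δ * ‖Complex.GammaSeq za n / Complex.GammaSeq zb n‖
        ≤ ((Complex.GammaSeq za n / Complex.GammaSeq zb n) * Complex.exp ((θ:ℂ) * Complex.I)).im := by
    filter_upwards [eventually_ge_atTop 1] with n hn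
    obtain ⟨ρ, hρ0, hρabs, hEq⟩ := hρrep n hn
    rw [← hρabs, hEq]
    rw [mul_assoc, ← Complex.exp_add]
    have h1 : ((-φ n : ℝ):ℂ) * Complex.I + (θ:ℂ) * Complex.I = ((θ - φ n : ℝ):ℂ) * Complex.I := by
      push_cast; ring
    rw [h1, im_ofReal_mul_exp]
    have hs : Real.sin δ ≤ Real.sin (θ - φ n) := by
      apply Real.sin_le_sin_of_le_of_le_pi_div_two
      · nlinarith [Real.pi_gt_three]
      · nlinarith [Real.pi_gt_three, hφ_nonneg n]
      · linarith [hφ_le n]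
    nlinarith [mul_le_mul_of_nonneg_right hs hρ0]
  have hkey : Real.sin δ * ‖R‖ ≤ (R * Complex.exp ((θ:ℂ) * Complex.I)).im :=
    le_of_tendsto_of_tendsto htendAbs htendIm hev
  have hsinδ : 0 < Real.sin δ :=
    Real.sin_pos_of_pos_of_lt_pi hδpos (by nlinarith [Real.pi_gt_three])
  have habsR : 0 < ‖R‖ := norm_pos_iff.mpr hRne
  have hImpos : 0 < (R * Complex.exp ((θ:ℂ) * Complex.I)).im :=
    lt_of_lt_of_le (mul_pos hsinδ habsR) hkey
  -- T_B equals a positive real multiple of R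
  have hsa : 0 < Real.sin (π*α) :=
    Real.sin_pos_of_pos_of_lt_pi (by positivity) (by nlinarith [Real.pi_pos])
  have hΓ2α : 0 < Real.Gamma (2*α) := Real.Gamma_pos_of_pos (by linarith)
  have hc : (0:ℝ) < Real.sin (π*α) / π * Real.Gamma (2*α) :=
    mul_pos (div_pos hsa Real.pi_pos) hΓ2α
  have hTBeq : TB α τ ξ = ((Real.sin (π*α) / π * Real.Gamma (2*α) : ℝ):ℂ) * R := by
    rw [TB, hRdef, hzadef, hzbdef]
    rw [show ((π:ℂ) * (α:ℂ)) = ((π*α : ℝ) : ℂ) by push_cast; ring, ← Complex.ofReal_sin]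
    rw [show (2*(α:ℂ)) = (((2*α : ℝ)) : ℂ) by push_cast; ring, Complex.Gamma_ofReal]
    push_cast
    ring
  rw [hTBeq, Complex.arg_real_mul _ hc]
  have := argLemmaA hθpos hθπ hImpos
  linarith

end MainParts

/-- For `0 < α < 1/2`, `0 < ξ < 1/4` and `τ` with `α ≤ τ < 1` or `1+α ≤ τ < 2`, one has
`arg T_B > −4αξ > arg T_s` (principal argument). -/
theorem arg_TB_gt_neg_four_alpha_xi_gt_arg_Ts
    (α τ ξ : ℝ) (hα : 0 < α) (hα' : α < 1 / 2) (hξ : 0 < ξ) (hξ' : ξ < 1 / 4)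
    (hτ : (α ≤ τ ∧ τ < 1) ∨ (1 + α ≤ τ ∧ τ < 2)) :
    -4 * α * ξ < Complex.arg (TB α τ ξ) ∧ Complex.arg (Ts α τ ξ) < -4 * α * ξ :=
  ⟨TB_arg_gt α τ ξ hα hα' hξ hξ' hτ, Ts_arg_lt α τ ξ hα hα' hξ hξ'⟩
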